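/- (Theorem 4.2) Let K be a finite simplicial complex in ℝⁿ that is pure n-dimensional (every face of K is contained in a face consisting of n+1 points forming an affine basis of ℝⁿ), let L be a finite simplicial complex in ℝᵐ with nonempty space, let g : ℝⁿ → ℝᵐ be continuous on K.space with g(K.space) ⊆ L.space, and let ε > 0. Then there exist k ≥ 1, affine bases σ_1, …, σ_k of ℝⁿ whose convex hulls cover K.space, and affine maps A_1, …, A_k : ℝⁿ → ℝᵐ such that the two-hidden-layer feed-forward network N of the paper's architecture determined by the σ_i and A_i satisfies N(x) ∈ L.space and ‖g(x) − N(x)‖ ≤ ε for every x ∈ K.space. -/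

import Mathlib

open scoped BigOperators
open Geometry

/-- The indicator ψ of an affine basis σ: 1 if all barycentric coordinates of x with
respect to σ are ≥ 0, 0 otherwise. -/
noncomputable def simplexIndicator {n : ℕ}
    (σ : AffineBasis (Fin (n + 1)) ℝ (Fin n → ℝ)) (x : Fin n → ℝ) : ℝ :=
  if ∀ i, 0 ≤ σ.coord i x then 1 else 0

/-- The two-hidden-layer feed-forward network of the paper's architecture determined by
affine bases σ_1, …, σ_k of ℝⁿ and affine maps A_1, …, A_k : ℝⁿ → ℝᵐ. -/
noncomputable def paperNetwork {n m k : ℕ}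
    (σ : Fin k → AffineBasis (Fin (n + 1)) ℝ (Fin n → ℝ))
    (A : Fin k → ((Fin n → ℝ) →ᵃ[ℝ] (Fin m → ℝ))) (x : Fin n → ℝ) : Fin m → ℝ :=
  (∑ i, simplexIndicator (σ i) x)⁻¹ • ∑ i, simplexIndicator (σ i) x • A i (x)

/-- K is pure n-dimensional: every face is contained in a face consisting of n+1 points
which form an affine basis of ℝⁿ. -/
def IsPureComplex {n : ℕ} (K : SimplicialComplex ℝ (Fin n → ℝ)) : Prop :=
  ∀ σ ∈ K.faces, ∃ τ ∈ K.faces, σ ⊆ τ ∧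
    ∃ b : AffineBasis (Fin (n + 1)) ℝ (Fin n → ℝ), Set.range ⇑b = (τ : Set (Fin n → ℝ))

lemma simplexIndicator_eq_one_iff {n : ℕ}
    (σ : AffineBasis (Fin (n + 1)) ℝ (Fin n → ℝ)) (x : Fin n → ℝ) :
    simplexIndicator σ x = 1 ↔ x ∈ convexHull ℝ (Set.range ⇑σ) := by
  rw [AffineBasis.convexHull_eq_nonneg_coord]
  unfold simplexIndicator
  by_cases h : ∀ i, 0 ≤ σ.coord i x
  · simp [h]
  · simp [h]

lemma simplexIndicator_zero_or_one {n : ℕ}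
    (σ : AffineBasis (Fin (n + 1)) ℝ (Fin n → ℝ)) (x : Fin n → ℝ) :
    simplexIndicator σ x = 0 ∨ simplexIndicator σ x = 1 := by
  unfold simplexIndicator; split <;> simp

lemma simplexIndicator_nonneg {n : ℕ}
    (σ : AffineBasis (Fin (n + 1)) ℝ (Fin n → ℝ)) (x : Fin n → ℝ) :
    0 ≤ simplexIndicator σ x := by
  unfold simplexIndicator; split <;> norm_num

/-- Map an affine basis through an affine equivalence. -/
noncomputable def mapAffineBasis {n : ℕ} (b : AffineBasis (Fin (n + 1)) ℝ (Fin n → ℝ))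
    (e : (Fin n → ℝ) ≃ᵃ[ℝ] (Fin n → ℝ)) : AffineBasis (Fin (n + 1)) ℝ (Fin n → ℝ) :=
  ⟨⇑e ∘ ⇑b, b.ind.map' e.toAffineMap e.injective, by
    rw [Set.range_comp]
    have := AffineMap.span_eq_top_of_surjective e.toAffineMap e.surjective b.tot
    simpa using this⟩

lemma mapAffineBasis_range {n : ℕ} (b : AffineBasis (Fin (n + 1)) ℝ (Fin n → ℝ))
    (e : (Fin n → ℝ) ≃ᵃ[ℝ] (Fin n → ℝ)) :
    Set.range ⇑(mapAffineBasis b e) = ⇑e '' Set.range ⇑b := by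
  show Set.range (⇑e ∘ ⇑b) = _
  rw [Set.range_comp]

lemma carrier_exists {m : ℕ} (L : SimplicialComplex ℝ (Fin m → ℝ)) (hLfin : L.faces.Finite) :
    ∀ q ∈ L.space, ∃ τ ∈ L.faces, q ∈ convexHull ℝ (τ : Set (Fin m → ℝ)) ∧
      ∀ τ' ∈ L.faces, q ∈ convexHull ℝ (τ' : Set (Fin m → ℝ)) → τ ⊆ τ' := by
  classical
  intro q hq
  rw [SimplicialComplex.mem_space_iff] at hq
  set S : Finset (Finset (Fin m → ℝ)) :=
    hLfin.toFinset.filter (fun τ => q ∈ convexHull ℝ (τ : Set (Fin m → ℝ))) with hS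
  have hSne : S.Nonempty := by
    obtain ⟨τ, hτ, hqτ⟩ := hq
    exact ⟨τ, by simp [hS, hLfin.mem_toFinset, hτ, hqτ]⟩
  obtain ⟨τ, hτS, hmin⟩ := S.exists_min_image Finset.card hSne
  have hτfaces : τ ∈ L.faces := by
    have := (Finset.mem_filter.1 hτS).1; rwa [hLfin.mem_toFinset] at this
  have hqτ : q ∈ convexHull ℝ (τ : Set (Fin m → ℝ)) := (Finset.mem_filter.1 hτS).2
  refine ⟨τ, hτfaces, hqτ, ?_⟩
  intro τ' hτ' hq'
  have hint : q ∈ convexHull ℝ ((τ ∩ τ' : Finset (Fin m → ℝ)) : Set (Fin m → ℝ)) := by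
    have := L.inter_subset_convexHull hτfaces hτ' ⟨hqτ, hq'⟩
    simpa using this
  have hne : (τ ∩ τ' : Finset (Fin m → ℝ)) ≠ ∅ := by
    intro h
    rw [h] at hint
    simp at hint
  have hfaces : (τ ∩ τ' : Finset (Fin m → ℝ)) ∈ L.faces :=
    L.down_closed hτfaces Finset.inter_subset_left (Finset.nonempty_iff_ne_empty.2 hne)
  have hS' : (τ ∩ τ' : Finset (Fin m → ℝ)) ∈ S := by
    rw [hS, Finset.mem_filter, hLfin.mem_toFinset]
    exact ⟨hfaces, hint⟩
  have hcard := hmin _ hS'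
  have heq : τ ∩ τ' = τ :=
    Finset.eq_of_subset_of_card_le Finset.inter_subset_left hcard
  intro a ha
  rw [← heq] at ha
  exact (Finset.mem_inter.1 ha).2

set_option linter.unnecessarySeqFocus false in

lemma network_combo {M : ℕ} {k : ℕ} (ψ : Fin k → ℝ) (hψ : ∀ i, ψ i = 0 ∨ ψ i = 1)
    (i0 : Fin k) (hi0 : ψ i0 = 1) (p : Fin k → Fin M → ℝ) (Cset : Set (Fin M → ℝ))
    (hC : Convex ℝ Cset) (q : Fin M → ℝ) (ε2 : ℝ)
    (hmem : ∀ i, ψ i = 1 → p i ∈ Cset ∧ dist q (p i) ≤ ε2) :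
    ((∑ i, ψ i)⁻¹ • ∑ i, ψ i • p i) ∈ Cset ∧
      ‖q - (∑ i, ψ i)⁻¹ • ∑ i, ψ i • p i‖ ≤ ε2 := by
  classical
  have hψnn : ∀ i, 0 ≤ ψ i := by
    intro i; rcases hψ i with h | h <;> rw [h] <;> norm_num
  set S : ℝ := ∑ i, ψ i with hSdef
  have hS : 0 < S := by
    have := Finset.single_le_sum (fun i _ => hψnn i) (Finset.mem_univ i0)
    rw [hi0] at this
    linarith
  set w : Fin k → ℝ := fun i => S⁻¹ * ψ i with hw
  have hwnn : ∀ i, 0 ≤ w i := fun i => mul_nonneg (inv_nonneg.2 hS.le) (hψnn i)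
  have hw1 : ∑ i, w i = 1 := by
    rw [hw]
    simp only [← Finset.mul_sum, ← hSdef]
    exact inv_mul_cancel₀ hS.ne'
  have hNet : S⁻¹ • ∑ i, ψ i • p i = ∑ i, w i • p i := by
    rw [Finset.smul_sum]
    exact Finset.sum_congr rfl fun i _ => smul_smul _ _ _
  set F : Finset (Fin k) := Finset.univ.filter (fun i => ψ i = 1) with hF
  have hw0 : ∀ i ∉ F, w i = 0 := by
    intro i hiF
    have : ψ i = 0 := by
      rcases hψ i with h | h
      · exact h
      · exact absurd (Finset.mem_filter.2 ⟨Finset.mem_univ i, h⟩) hiF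
    simp [hw, this]
  have hsum_eq : ∑ i, w i • p i = ∑ i ∈ F, w i • p i := by
    symm
    apply Finset.sum_subset (Finset.subset_univ F)
    intro i _ hiF
    rw [hw0 i hiF, zero_smul]
  have hwF : ∑ i ∈ F, w i = 1 := by
    rw [← hw1]
    apply Finset.sum_subset (Finset.subset_univ F)
    intro i _ hiF
    exact hw0 i hiF
  rw [hNet, hsum_eq]
  constructor
  · exact hC.sum_mem (fun i _ => hwnn i) hwF
      (fun i hiF => (hmem i (Finset.mem_filter.1 hiF).2).1)
  · have hrw : q - ∑ i ∈ F, w i • p i = ∑ i ∈ F, w i • (q - p i) := by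
      rw [Finset.sum_congr rfl (fun i _ => smul_sub (w i) q (p i))]
      rw [Finset.sum_sub_distrib, ← Finset.sum_smul, hwF, one_smul]
    rw [hrw]
    have hε2 : 0 ≤ ε2 := le_trans dist_nonneg (hmem i0 hi0).2
    calc ‖∑ i ∈ F, w i • (q - p i)‖ ≤ ∑ i ∈ F, ‖w i • (q - p i)‖ := norm_sum_le _ _
    _ = ∑ i ∈ F, w i * ‖q - p i‖ := by
        refine Finset.sum_congr rfl fun i _ => ?_
        rw [norm_smul, Real.norm_eq_abs, abs_of_nonneg (hwnn i)]
    _ ≤ ∑ i ∈ F, w i * ε2 := by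
        refine Finset.sum_le_sum fun i hiF => ?_
        refine mul_le_mul_of_nonneg_left ?_ (hwnn i)
        rw [← dist_eq_norm]
        exact (hmem i (Finset.mem_filter.1 hiF).2).2
    _ = ε2 := by rw [← Finset.sum_mul, hwF, one_mul]



set_option maxHeartbeats 1000000 in
/-- Theorem 4.2: any continuous g : |K| → |L| between the spaces of a
finite pure simplicial complex K in ℝⁿ and a finite simplicial complex L in ℝᵐ can be
ε-approximated on K.space by a two-hidden-layer feed-forward network of the paper's
architecture whose values lie in L.space. -/
theorem universal_approximation_complexes (n m : ℕ)
    (K : SimplicialComplex ℝ (Fin n → ℝ)) (hKfin : K.faces.Finite)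
    (hKpure : IsPureComplex K)
    (L : SimplicialComplex ℝ (Fin m → ℝ)) (hLfin : L.faces.Finite)
    (hLne : L.space.Nonempty)
    (g : (Fin n → ℝ) → (Fin m → ℝ)) (hg : ContinuousOn g K.space)
    (hgmaps : Set.MapsTo g K.space L.space) (ε : ℝ) (hε : 0 < ε) :
    ∃ (k : ℕ) (_ : 1 ≤ k) (σ : Fin k → AffineBasis (Fin (n + 1)) ℝ (Fin n → ℝ))
      (A : Fin k → ((Fin n → ℝ) →ᵃ[ℝ] (Fin m → ℝ))),
      K.space ⊆ (⋃ i, convexHull ℝ (Set.range ⇑(σ i))) ∧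
      ∀ x ∈ K.space, paperNetwork σ A x ∈ L.space ∧ ‖g x - paperNetwork σ A x‖ ≤ ε := by
  classical
  obtain ⟨b0⟩ : Nonempty (AffineBasis (Fin (n + 1)) ℝ (Fin n → ℝ)) :=
    AffineBasis.exists_affineBasis_of_finiteDimensional (by simp)
  by_cases hKs : K.space.Nonempty
  swap
  · rw [Set.not_nonempty_iff_eq_empty] at hKs
    refine ⟨1, le_rfl, fun _ => b0, fun _ => AffineMap.const ℝ (Fin n → ℝ) 0, ?_, ?_⟩
    · rw [hKs]; exact Set.empty_subset _
    · intro x hx; rw [hKs] at hx; exact absurd hx (Set.notMem_empty x)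
  -- compactness facts
  have hKc : IsCompact K.space :=
    hKfin.isCompact_biUnion fun s _ => s.finite_toSet.isCompact_convexHull ℝ
  have hCc : IsCompact (g '' K.space) := hKc.image_of_continuousOn hg
  have hCL : g '' K.space ⊆ L.space := hgmaps.image_subset
  -- carrier machinery on L
  choose! car hcarF hcarM hcarMin using carrier_exists L hLfin
  set U : (Fin m → ℝ) → Set (Fin m → ℝ) := fun q =>
    (⋃ τ ∈ {τ ∈ L.faces | ¬ car q ⊆ τ}, convexHull ℝ (τ : Set (Fin m → ℝ)))ᶜ with hU
  have hUopen : ∀ q, IsOpen (U q) := by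
    intro q
    apply isOpen_compl_iff.2
    exact Set.Finite.isClosed_biUnion (hLfin.subset (Set.sep_subset _ _))
      fun τ _ => (τ.finite_toSet.isCompact_convexHull ℝ).isClosed
  have hUmem : ∀ q ∈ L.space, q ∈ U q := by
    intro q hq
    simp only [hU, Set.mem_compl_iff, Set.mem_iUnion]
    rintro ⟨τ, ⟨⟨hτ, hbad⟩, hqτ⟩⟩
    exact hbad (hcarMin q hq τ hτ hqτ)
  have hUkey : ∀ q ∈ L.space, ∀ r ∈ L.space, r ∈ U q → car q ⊆ car r := by
    intro q hq r hr hrU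
    by_contra hnot
    apply hrU
    simp only [Set.mem_iUnion]
    exact ⟨car r, ⟨⟨hcarF r hr, hnot⟩, hcarM r hr⟩⟩
  -- Lebesgue number for the refined star cover of g '' K.space
  have hcover : g '' K.space ⊆
      ⋃ p : g '' K.space, (U ↑p ∩ Metric.ball (↑p : Fin m → ℝ) (ε / 2)) := by
    intro q hq
    exact Set.mem_iUnion.2 ⟨⟨q, hq⟩, hUmem q (hCL hq), Metric.mem_ball_self (by positivity)⟩
  obtain ⟨ℓ, hℓ, hLeb⟩ := lebesgue_number_lemma_of_metric (ι := ↥(g '' K.space))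
    (c := fun p => U ↑p ∩ Metric.ball (↑p : Fin m → ℝ) (ε / 2)) hCc
    (fun p => (hUopen ↑p).inter Metric.isOpen_ball) hcover
  -- uniform continuity of g
  have hUC := hKc.uniformContinuousOn_of_continuous hg
  rw [Metric.uniformContinuousOn_iff] at hUC
  obtain ⟨δg, hδg, hgδ⟩ := hUC ℓ hℓ
  -- the reference simplex
  set m0 : Fin n → ℝ := Finset.univ.centroid ℝ ⇑b0 with hm0def
  have hm0 : m0 ∈ interior (convexHull ℝ (Set.range ⇑b0)) :=
    b0.centroid_mem_interior_convexHull
  obtain ⟨r0, hr0, hball⟩ := Metric.mem_nhds_iff.1 (mem_interior_iff_mem_nhds.1 hm0)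
  have hballsub : Metric.ball m0 r0 ⊆ convexHull ℝ (Set.range ⇑b0) := hball
  obtain ⟨R0, hR0⟩ :=
    (((Set.finite_range ⇑b0).isCompact_convexHull ℝ).isBounded).subset_closedBall m0
  set R1 : ℝ := max R0 1 with hR1def
  have hR1pos : 0 < R1 := lt_of_lt_of_le one_pos (le_max_right _ _)
  have hR1 : convexHull ℝ (Set.range ⇑b0) ⊆ Metric.closedBall m0 R1 :=
    hR0.trans (Metric.closedBall_subset_closedBall (le_max_left _ _))
  set s0 : ℝ := δg / (2 * R1) with hs0def
  have hs0 : 0 < s0 := by positivity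
  -- scaled and translated simplices
  set T : (Fin n → ℝ) → (Fin n → ℝ) ≃ᵃ[ℝ] (Fin n → ℝ) := fun c =>
    (AffineEquiv.homothetyUnitsMulHom m0 (Units.mk0 s0 hs0.ne')).trans
      (AffineEquiv.constVAdd ℝ (Fin n → ℝ) (c - m0)) with hT
  have hTapp : ∀ c y, T c y = c + s0 • (y - m0) := by
    intro c y
    simp only [hT, AffineEquiv.trans_apply, AffineEquiv.coe_homothetyUnitsMulHom_apply,
      AffineMap.homothety_apply, AffineEquiv.constVAdd_apply]
    simp only [vsub_eq_sub, vadd_eq_add]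
    abel
  set B : (Fin n → ℝ) → AffineBasis (Fin (n + 1)) ℝ (Fin n → ℝ) := fun c =>
    mapAffineBasis b0 (T c) with hB
  have hBconv : ∀ c,
      convexHull ℝ (Set.range ⇑(B c)) = ⇑(T c) '' convexHull ℝ (Set.range ⇑b0) := by
    intro c
    rw [hB, mapAffineBasis_range]
    exact ((T c).toAffineMap.image_convexHull _).symm
  have hBcov : ∀ c, Metric.ball c (s0 * r0) ⊆ convexHull ℝ (Set.range ⇑(B c)) := by
    intro c w hw
    rw [hBconv]
    refine ⟨m0 + s0⁻¹ • (w - c), hballsub ?_, ?_⟩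
    · rw [Metric.mem_ball, dist_eq_norm]
      have : m0 + s0⁻¹ • (w - c) - m0 = s0⁻¹ • (w - c) := by abel
      rw [this, norm_smul, Real.norm_eq_abs, abs_of_pos (by positivity)]
      rw [Metric.mem_ball, dist_eq_norm] at hw
      rw [inv_mul_lt_iff₀ hs0]
      exact hw
    · rw [hTapp]
      have : s0 • (m0 + s0⁻¹ • (w - c) - m0) = s0 • (s0⁻¹ • (w - c)) := by
        congr 1; abel
      rw [this, smul_smul, mul_inv_cancel₀ hs0.ne', one_smul]
      abel
  have hBsmall : ∀ c, ∀ x ∈ convexHull ℝ (Set.range ⇑(B c)), dist x c ≤ s0 * R1 := by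
    intro c x hx
    rw [hBconv] at hx
    obtain ⟨y, hy, rfl⟩ := hx
    have hyb : dist y m0 ≤ R1 := Metric.mem_closedBall.1 (hR1 hy)
    rw [hTapp, dist_eq_norm]
    have : c + s0 • (y - m0) - c = s0 • (y - m0) := by abel
    rw [this, norm_smul, Real.norm_eq_abs, abs_of_pos hs0]
    rw [dist_eq_norm] at hyb
    exact mul_le_mul_of_nonneg_left hyb hs0.le
  -- finite net of centers
  obtain ⟨t, htK, htcov⟩ := hKc.elim_nhds_subcover (fun c => Metric.ball c (s0 * r0))
    (fun c _ => Metric.ball_mem_nhds c (by positivity))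
  have htne : t.Nonempty := by
    obtain ⟨x, hx⟩ := hKs
    obtain ⟨c, hc, _⟩ := Set.mem_iUnion₂.1 (htcov hx)
    exact ⟨c, hc⟩
  set k : ℕ := t.card with hk
  have hk1 : 1 ≤ k := Finset.card_pos.2 htne
  set etk : ↑t ≃ Fin k := (Fintype.equivFin ↑t).trans (finCongr (Fintype.card_coe t)) with hetk
  set cpt : Fin k → (Fin n → ℝ) := fun i => ↑(etk.symm i) with hcpt
  have hcK : ∀ i, cpt i ∈ K.space := fun i => htK _ (etk.symm i).2
  -- choose the values p i via the Lebesgue number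
  have hpick : ∀ i : Fin k, ∃ p ∈ g '' K.space,
      Metric.ball (g (cpt i)) ℓ ⊆ U p ∩ Metric.ball p (ε / 2) := by
    intro i
    obtain ⟨p, hp⟩ := hLeb (g (cpt i)) (Set.mem_image_of_mem g (hcK i))
    exact ⟨↑p, p.2, hp⟩
  choose p hpC hpball using hpick
  set σ : Fin k → AffineBasis (Fin (n + 1)) ℝ (Fin n → ℝ) := fun i => B (cpt i) with hσ
  set A : Fin k → ((Fin n → ℝ) →ᵃ[ℝ] (Fin m → ℝ)) :=
    fun i => AffineMap.const ℝ (Fin n → ℝ) (p i) with hA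
  have hcov : K.space ⊆ ⋃ i, convexHull ℝ (Set.range ⇑(σ i)) := by
    intro x hx
    obtain ⟨c, hct, hxc⟩ := Set.mem_iUnion₂.1 (htcov hx)
    refine Set.mem_iUnion.2 ⟨etk ⟨c, hct⟩, ?_⟩
    have hc' : cpt (etk ⟨c, hct⟩) = c := by simp [hcpt]
    rw [hσ]
    apply hBcov
    rw [hc']
    exact hxc
  refine ⟨k, hk1, σ, A, hcov, ?_⟩
  intro x hx
  have hgxL : g x ∈ L.space := hgmaps hx
  -- key fact about active simplices
  have hact : ∀ i, simplexIndicator (σ i) x = 1 →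
      p i ∈ convexHull ℝ ((car (g x) : Finset (Fin m → ℝ)) : Set (Fin m → ℝ))
        ∧ dist (g x) (p i) < ε / 2 := by
    intro i hi
    have hxconv : x ∈ convexHull ℝ (Set.range ⇑(σ i)) :=
      (simplexIndicator_eq_one_iff _ _).1 hi
    have hdist : dist x (cpt i) ≤ s0 * R1 := hBsmall (cpt i) x hxconv
    have hlt : dist x (cpt i) < δg := by
      apply lt_of_le_of_lt hdist
      rw [hs0def, div_mul_eq_mul_div, div_lt_iff₀ (by positivity : (0:ℝ) < 2 * R1)]
      nlinarith [hR1pos, hδg]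
    have hgd : dist (g x) (g (cpt i)) < ℓ := hgδ x hx (cpt i) (hcK i) hlt
    have h2 := hpball i (Metric.mem_ball.2 hgd)
    have hpiL : p i ∈ L.space := hCL (hpC i)
    have hsub : car (p i) ⊆ car (g x) := hUkey (p i) hpiL (g x) hgxL h2.1
    refine ⟨?_, Metric.mem_ball.1 h2.2⟩
    exact convexHull_mono (Finset.coe_subset.2 hsub) (hcarM (p i) hpiL)
  obtain ⟨i0, hi0⟩ := Set.mem_iUnion.1 (hcov hx)
  have hi0' : simplexIndicator (σ i0) x = 1 := (simplexIndicator_eq_one_iff _ _).2 hi0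
  have hAp : ∀ i, A i x = p i := by
    intro i
    simp [hA]
  have hNet : paperNetwork σ A x
      = (∑ i, simplexIndicator (σ i) x)⁻¹ • ∑ i, simplexIndicator (σ i) x • p i := by
    simp only [paperNetwork, hA, AffineMap.const_apply]
  have hmain := network_combo (fun i => simplexIndicator (σ i) x)
    (fun i => simplexIndicator_zero_or_one _ _) i0 hi0' p
    (convexHull ℝ ((car (g x) : Finset (Fin m → ℝ)) : Set (Fin m → ℝ)))
    (convex_convexHull ℝ _) (g x) (ε / 2)
    (fun i hi => ⟨(hact i hi).1, (hact i hi).2.le⟩)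
  rw [hNet]
  exact ⟨L.convexHull_subset_space (hcarF (g x) hgxL) hmain.1,
    hmain.2.trans (by linarith)⟩
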